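/- arXiv:2012.07785 — 6 statements merged into one kernel-verified Lean document; each statement's English description precedes it below -/
import Mathlib

section
/- Fix α ∈ (0,1) and a set Δ := Δ_m × (−∞, t̄] ⊆ ℝ^m × ℝ. Assume: (i) ℓ(θ,·) and ∇_θ ℓ(θ,·) exist and are P-integrable for every θ; (ii) the argmin of G_α over Δ is nonempty, and (θ*, t*) is a member of it; (iii) for every (θ,t) ∈ Δ with P(A(θ,t)) > 0, the set-restricted Polyak–Łojasiewicz inequality holds with parameter μ > 0: (1/2)·‖E[∇_θ ℓ(θ,d) | A(θ,t)]‖₂² ≥ μ·E[ℓ(θ,d) − ℓ*(θ,t) | A(θ,t)], where ℓ*(θ,t) := inf_{θ̃ ∈ Δ_m} E[ℓ(θ̃,d) | A(θ,t)]. Then for every (θ,t) ∈ Δ satisfying P(A(θ,t)) > α + 2αμ·(t* − t)_+, one has μ·( G_α(θ,t) − G_α(θ*,t*) ) ≤ (1/2)·( ‖(1/α)·E[1_{A(θ,t)}(d)·∇_θ ℓ(θ,d)]‖₂² + ( 1 − (1/α)·P(A(θ,t)) )² ), i.e., the ordinary Polyak–Łojasiewicz inequality for G_α with the right-hand side equal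 to (1/2)‖∇G_α(θ,t)‖₂² under interchange of differentiation and expectation. -/
open MeasureTheory ProbabilityTheory

/-- The CV@R objective `G_α(θ,t) = E_P[t + (1/α)·(ℓ(θ,d) - t)₊]`. -/
noncomputable def Galpha {m : ℕ} {D : Type*} [MeasurableSpace D] (P : Measure D)
    (ℓ : EuclideanSpace ℝ (Fin m) → D → ℝ) (α : ℝ)
    (θ : EuclideanSpace ℝ (Fin m)) (t : ℝ) : ℝ :=
  ∫ d, (t + α⁻¹ * max (ℓ θ d - t) 0) ∂P

/-- The event `A(θ,t) = {d : ℓ(θ,d) - t > 0}`. -/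
def Aev {m : ℕ} {D : Type*} (ℓ : EuclideanSpace ℝ (Fin m) → D → ℝ)
    (θ : EuclideanSpace ℝ (Fin m)) (t : ℝ) : Set D :=
  {d | ℓ θ d - t > 0}

/-- `ℓ*(θ,t) = inf_{θ̃ ∈ Δm} E[ℓ(θ̃,d) | A(θ,t)]`. -/
noncomputable def lstar {m : ℕ} {D : Type*} [MeasurableSpace D] (P : Measure D)
    (ℓ : EuclideanSpace ℝ (Fin m) → D → ℝ) (Δm : Set (EuclideanSpace ℝ (Fin m)))
    (θ : EuclideanSpace ℝ (Fin m)) (t : ℝ) : ℝ :=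
  ⨅ θ' : Δm, ∫ d, ℓ (θ' : EuclideanSpace ℝ (Fin m)) d ∂(P[|Aev ℓ θ t])


lemma cond_integral_eq {D : Type*} [MeasurableSpace D] (P : Measure D)
    (A : Set D) {E : Type*} [NormedAddCommGroup E] [NormedSpace ℝ E] (f : D → E) :
    ∫ d, f d ∂(P[|A]) = ((P A).toReal)⁻¹ • ∫ d in A, f d ∂P := by
  rw [ProbabilityTheory.cond, integral_smul_measure, ENNReal.toReal_inv]

set_option maxHeartbeats 1000000 in
/-- (`G_α` is Polyak–Łojasiewicz.) Fix `α ∈ (0,1)` and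
`Δ = Δm × (-∞, t̄]`. Suppose `(θ*,t*)` minimizes `G_α` over `Δ`, and the loss satisfies the
`A`-restricted Polyak–Łojasiewicz inequality with parameter `μ > 0` on `Δ`:
`(1/2)‖E[∇ℓ(θ,·)|A(θ,t)]‖² ≥ μ·E[ℓ(θ,·) - ℓ*(θ,t)|A(θ,t)]` (with `ℓ*(θ,t)` the infimum over
`Δm` of the conditional means, assumed bounded below so it is a real number). Then for every
`(θ,t) ∈ Δ` with `P(A(θ,t)) > α + 2αμ(t* - t)₊`, the ordinary PL inequality holds for `G_α`:
`μ(G_α(θ,t) - G_α(θ*,t*)) ≤ (1/2)(‖(1/α)E[1_{A(θ,t)}∇ℓ(θ,·)]‖² + (1 - (1/α)P(A(θ,t)))²)`,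
whose right-hand side is `(1/2)‖∇G_α(θ,t)‖²` under interchange of differentiation and
expectation. -/
theorem cvar_objective_is_PL
    {m : ℕ} {D : Type*} [MeasurableSpace D]
    (P : Measure D) [IsProbabilityMeasure P]
    (ℓ : EuclideanSpace ℝ (Fin m) → D → ℝ)
    (g : EuclideanSpace ℝ (Fin m) → D → EuclideanSpace ℝ (Fin m))
    (hmeas : ∀ θ, Measurable (ℓ θ))
    (hintℓ : ∀ θ, Integrable (ℓ θ) P)
    (hintg : ∀ θ, Integrable (g θ) P)
    (α : ℝ) (hα : α ∈ Set.Ioo (0 : ℝ) 1)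
    (Δm : Set (EuclideanSpace ℝ (Fin m))) (tbar : ℝ)
    (μ : ℝ) (hμ : 0 < μ)
    (θstar : EuclideanSpace ℝ (Fin m)) (tstar : ℝ)
    (hstarmem : θstar ∈ Δm ∧ tstar ≤ tbar)
    (hmin : ∀ θ ∈ Δm, ∀ t ≤ tbar, Galpha P ℓ α θstar tstar ≤ Galpha P ℓ α θ t)
    (hbdd : ∀ θ ∈ Δm, ∀ t ≤ tbar, 0 < P (Aev ℓ θ t) →
      BddBelow (Set.range fun θ' : Δm =>
        ∫ d, ℓ (θ' : EuclideanSpace ℝ (Fin m)) d ∂(P[|Aev ℓ θ t])))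
    (hPL : ∀ θ ∈ Δm, ∀ t ≤ tbar, 0 < P (Aev ℓ θ t) →
      μ * ((∫ d, ℓ θ d ∂(P[|Aev ℓ θ t])) - lstar P ℓ Δm θ t) ≤
        (1 / 2) * ‖∫ d, g θ d ∂(P[|Aev ℓ θ t])‖ ^ 2) :
    ∀ θ ∈ Δm, ∀ t ≤ tbar,
      α + 2 * α * μ * max (tstar - t) 0 < (P (Aev ℓ θ t)).toReal →
      μ * (Galpha P ℓ α θ t - Galpha P ℓ α θstar tstar) ≤
        (1 / 2) * (‖α⁻¹ • ∫ d in Aev ℓ θ t, g θ d ∂P‖ ^ 2 +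
          (1 - α⁻¹ * (P (Aev ℓ θ t)).toReal) ^ 2) := by
  intro θ hθ t ht hcnd
  have hα0 : 0 < α := hα.1
  set A : Set D := Aev ℓ θ t with hAdef
  set p : ℝ := (P A).toReal with hpdef
  have hM0 : 0 ≤ max (tstar - t) 0 := le_max_right _ _
  have hαp : α < p := by nlinarith [mul_nonneg (mul_nonneg (mul_nonneg (by norm_num : (0:ℝ) ≤ 2) hα0.le) hμ.le) hM0]
  have hp0 : 0 < p := hα0.trans hαp
  have hPApos : 0 < P A := by
    rcases (zero_le (a := P A)).lt_or_eq with h | h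
    · exact h
    · exfalso; rw [hpdef, ← h] at hp0; simp at hp0
  -- measurability of events
  have hAmeas : ∀ (θ' : EuclideanSpace ℝ (Fin m)) (s : ℝ), MeasurableSet (Aev ℓ θ' s) := by
    intro θ' s
    have : Aev ℓ θ' s = {d | s < ℓ θ' d} := by ext d; simp [Aev, sub_pos]
    rw [this]
    exact measurableSet_lt measurable_const (hmeas θ')
  have hintmax : ∀ (θ' : EuclideanSpace ℝ (Fin m)) (s : ℝ),
      Integrable (fun d => max (ℓ θ' d - s) 0) P :=
    fun θ' s => ((hintℓ θ').sub (integrable_const s)).pos_part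
  -- G as full integral
  have hGfull : ∀ (θ' : EuclideanSpace ℝ (Fin m)) (s : ℝ),
      Galpha P ℓ α θ' s = s + α⁻¹ * ∫ d, max (ℓ θ' d - s) 0 ∂P := by
    intro θ' s
    unfold Galpha
    rw [integral_add (integrable_const s) ((hintmax θ' s).const_mul α⁻¹),
      integral_const, integral_const_mul]
    simp
  have hmax_eq : ∀ (θ' : EuclideanSpace ℝ (Fin m)) (s : ℝ),
      (fun d => max (ℓ θ' d - s) 0) = (Aev ℓ θ' s).indicator (fun d => ℓ θ' d - s) := by
    intro θ' s; funext d
    by_cases hd : d ∈ Aev ℓ θ' s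
    · simp only [Set.indicator_of_mem hd]
      exact max_eq_left (le_of_lt hd)
    · simp only [Set.indicator_of_notMem hd]
      exact max_eq_right (by simpa [Aev, not_lt] using hd)
  set J : ℝ := ∫ d in A, ℓ θ d ∂P with hJdef
  set K : ℝ := ∫ d in A, ℓ θstar d ∂P with hKdef
  set I : EuclideanSpace ℝ (Fin m) := ∫ d in A, g θ d ∂P with hIdef
  set n : ℝ := ‖I‖ with hndef
  have hn0 : 0 ≤ n := norm_nonneg _
  -- split set integral of (ℓ - s)
  have hsplit : ∀ (θ' : EuclideanSpace ℝ (Fin m)) (s : ℝ),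
      (∫ d in A, (ℓ θ' d - s) ∂P) = (∫ d in A, ℓ θ' d ∂P) - s * p := by
    intro θ' s
    rw [integral_sub ((hintℓ θ').integrableOn)
      (integrableOn_const (measure_lt_top P A).ne)]
    rw [setIntegral_const]
    simp [hpdef, smul_eq_mul, mul_comm, Measure.real]
  -- G at (θ,t)
  have hG : Galpha P ℓ α θ t = t + α⁻¹ * (J - t * p) := by
    rw [hGfull θ t, hmax_eq θ t, integral_indicator (hAmeas θ t), ← hAdef, hsplit θ t]
  -- lower bound for G at (θ*,t*)
  have hGs : tstar + α⁻¹ * (K - tstar * p) ≤ Galpha P ℓ α θstar tstar := by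
    rw [hGfull θstar tstar]
    have h1 : (∫ d in A, max (ℓ θstar d - tstar) 0 ∂P) ≤ ∫ d, max (ℓ θstar d - tstar) 0 ∂P :=
      setIntegral_le_integral (hintmax θstar tstar)
        (Filter.Eventually.of_forall fun d => le_max_right _ _)
    have h2 : (∫ d in A, (ℓ θstar d - tstar) ∂P) ≤ ∫ d in A, max (ℓ θstar d - tstar) 0 ∂P :=
      integral_mono (((hintℓ θstar).sub (integrable_const tstar)).restrict)
        ((hintmax θstar tstar).restrict) (fun d => le_max_left _ _)
    have h3 : K - tstar * p ≤ ∫ d, max (ℓ θstar d - tstar) 0 ∂P := by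
      rw [← hsplit θstar tstar]; linarith
    have := mul_le_mul_of_nonneg_left h3 (inv_nonneg.mpr hα0.le)
    linarith
  -- conditional integrals
  have hcondl : (∫ d, ℓ θ d ∂(P[|A])) = p⁻¹ * J := by
    rw [cond_integral_eq, smul_eq_mul]
  have hcondls : (∫ d, ℓ θstar d ∂(P[|A])) = p⁻¹ * K := by
    rw [cond_integral_eq, smul_eq_mul]
  have hcondg : (∫ d, g θ d ∂(P[|A])) = p⁻¹ • I := by
    rw [cond_integral_eq]
  -- lstar bound
  have hK : lstar P ℓ Δm θ t ≤ p⁻¹ * K := by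
    have := ciInf_le (hbdd θ hθ t ht hPApos) (⟨θstar, hstarmem.1⟩ : Δm)
    rw [lstar] at *
    rw [← hAdef] at this ⊢
    simpa [hcondls] using this
  -- PL instantiated
  have hPLi := hPL θ hθ t ht hPApos
  rw [← hAdef, hcondl, hcondg] at hPLi
  have hnrm : ‖p⁻¹ • I‖ = p⁻¹ * n := by
    rw [norm_smul, Real.norm_eq_abs, abs_of_nonneg (inv_nonneg.mpr hp0.le)]
  rw [hnrm] at hPLi
  -- step B : μ * α⁻¹ * (J - K) ≤ 1/2 * (α⁻¹ * n)^2
  have hstep : μ * (p⁻¹ * J - p⁻¹ * K) ≤ 1/2 * (p⁻¹ * n)^2 := by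
    have := mul_le_mul_of_nonneg_left (sub_le_sub_left hK (p⁻¹ * J)) hμ.le
    linarith
  have h2 : μ * (J - K) * p ≤ 1/2 * n^2 := by
    have e1 : μ * (J - K) * p = p^2 * (μ * (p⁻¹ * J - p⁻¹ * K)) := by
      field_simp
    have e2 : p^2 * (1/2 * (p⁻¹ * n)^2) = 1/2 * n^2 := by
      field_simp
    rw [e1, ← e2]
    exact mul_le_mul_of_nonneg_left hstep (by positivity)
  have hB : μ * α⁻¹ * (J - K) ≤ 1/2 * (α⁻¹ * n)^2 := by
    rcases le_or_gt (J - K) 0 with hX | hX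
    · have : μ * α⁻¹ * (J - K) ≤ 0 :=
        mul_nonpos_of_nonneg_of_nonpos (by positivity) hX
      nlinarith [sq_nonneg (α⁻¹ * n)]
    · have h4 : μ * (J - K) * α ≤ 1/2 * n^2 := by
        nlinarith [mul_pos hμ hX]
      have h6 : μ * (J - K) ≤ 1/2 * n^2 / α := (le_div_iff₀ hα0).mpr h4
      have h7 := mul_le_mul_of_nonneg_left h6 (inv_nonneg.mpr hα0.le)
      have e3 : α⁻¹ * (1/2 * n^2 / α) = 1/2 * (α⁻¹ * n)^2 := by
        ring
      calc μ * α⁻¹ * (J - K) = α⁻¹ * (μ * (J - K)) := by ring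
        _ ≤ α⁻¹ * (1/2 * n^2 / α) := h7
        _ = 1/2 * (α⁻¹ * n)^2 := e3
  -- step C
  have hc : 0 < α⁻¹ * p - 1 := by
    have : 1 < p / α := (one_lt_div hα0).mpr hαp
    rw [div_eq_inv_mul] at this
    linarith
  have hhalf : μ * max (tstar - t) 0 ≤ (α⁻¹ * p - 1) / 2 := by
    rw [le_div_iff₀ (by norm_num : (0:ℝ) < 2)]
    have e4 : α * (α⁻¹ * p - 1) = p - α := by
      rw [mul_sub, mul_one, mul_inv_cancel_left₀ hα0.ne']
    nlinarith [hcnd, e4, hα0]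
  have hμM : μ * (tstar - t) ≤ μ * max (tstar - t) 0 :=
    mul_le_mul_of_nonneg_left (le_max_left _ _) hμ.le
  have hC : μ * (t - tstar) * (1 - α⁻¹ * p) ≤ 1/2 * (1 - α⁻¹ * p)^2 := by
    nlinarith [mul_le_mul_of_nonneg_right (hμM.trans hhalf) hc.le]
  -- combine
  have hdiff : Galpha P ℓ α θ t - Galpha P ℓ α θstar tstar ≤
      (t - tstar) * (1 - α⁻¹ * p) + α⁻¹ * (J - K) := by
    calc Galpha P ℓ α θ t - Galpha P ℓ α θstar tstar
        ≤ (t + α⁻¹ * (J - t * p)) - (tstar + α⁻¹ * (K - tstar * p)) := by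
          rw [hG]; linarith
      _ = (t - tstar) * (1 - α⁻¹ * p) + α⁻¹ * (J - K) := by ring
  have hmain := mul_le_mul_of_nonneg_left hdiff hμ.le
  have hnrm2 : ‖α⁻¹ • I‖ = α⁻¹ * n := by
    rw [norm_smul, Real.norm_eq_abs, abs_of_nonneg (inv_nonneg.mpr hα0.le)]
  rw [hnrm2]
  nlinarith [hmain, hB, hC]
end

section
/- For all real numbers a, b, t, t* and every α ∈ (0,1], one has ( t + (1/α)·(a − t)_+ ) − ( t* + (1/α)·(b − t*)_+ ) ≤ (t* − t)·( (1/α)·1{a > t} − 1 ) + (1/α)·1{a > t}·(a − b), where 1{a > t} equals 1 if a > t and 0 otherwise. -/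
/-- Pointwise bound on the difference of the CV@R integrands: for all reals
`a, b, t, t*` and `α ∈ (0,1]`,
`(t + (1/α)(a-t)₊) - (t* + (1/α)(b-t*)₊) ≤ (t*-t)((1/α)·1{a>t} - 1) + (1/α)·1{a>t}·(a-b)`. -/
theorem cvar_integrand_difference_bound
    (a b t tstar α : ℝ) (hα : α ∈ Set.Ioc (0 : ℝ) 1) :
    (t + α⁻¹ * max (a - t) 0) - (tstar + α⁻¹ * max (b - tstar) 0) ≤
      (tstar - t) * (α⁻¹ * (if a > t then (1 : ℝ) else 0) - 1) +
        α⁻¹ * (if a > t then (1 : ℝ) else 0) * (a - b) := by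
  obtain ⟨hα0, hα1⟩ := hα
  have hc : (0:ℝ) < α⁻¹ := inv_pos.mpr hα0
  have h1 : b - tstar ≤ max (b - tstar) 0 := le_max_left _ _
  have h2 : (0:ℝ) ≤ max (b - tstar) 0 := le_max_right _ _
  split_ifs with h
  · have : max (a - t) 0 = a - t := max_eq_left (by linarith)
    rw [this]
    nlinarith
  · have : max (a - t) 0 = 0 := max_eq_right (by push_neg at h; linarith)
    rw [this]
    nlinarith
end

section
/- Fix α ∈ (0,1], a set Δ_m ⊆ ℝ^m, a point (θ,t) ∈ ℝ^m × ℝ with P(A(θ,t)) > 0, and any (θ*, t*) ∈ Δ_m × ℝ. Assume ℓ(θ̃,·) is P-integrable for every θ̃. Then G_α(θ,t) − G_α(θ*,t*) ≤ (t* − t)·( (1/α)·P(A(θ,t)) − 1 ) + (1/α)·P(A(θ,t))·E[ ℓ(θ,d) − ℓ*(θ,t) | A(θ,t) ], where ℓ*(θ,t) := inf_{θ̃ ∈ Δ_m} E[ℓ(θ̃,d) | A(θ,t)]. -/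
open MeasureTheory ProbabilityTheory

/-- For `α ∈ (0,1]`, a point `(θ,t)` with `P(A(θ,t)) > 0` and any
`(θ*,t*) ∈ Δm × ℝ`,
`G_α(θ,t) - G_α(θ*,t*) ≤ (t*-t)((1/α)P(A(θ,t)) - 1) + (1/α)P(A(θ,t))·E[ℓ(θ,d) - ℓ*(θ,t) | A(θ,t)]`
(with the conditional-mean infimum `ℓ*(θ,t)` taken over `Δm`, assumed bounded below so that
it is a real number). -/
theorem cvar_objective_gap_bound
    {m : ℕ} {D : Type*} [MeasurableSpace D]
    (P : Measure D) [IsProbabilityMeasure P]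
    (ℓ : EuclideanSpace ℝ (Fin m) → D → ℝ)
    (hmeas : ∀ θ', Measurable (ℓ θ'))
    (hint : ∀ θ', Integrable (ℓ θ') P)
    (α : ℝ) (hα : α ∈ Set.Ioc (0 : ℝ) 1)
    (Δm : Set (EuclideanSpace ℝ (Fin m)))
    (θ : EuclideanSpace ℝ (Fin m)) (t : ℝ)
    (hA : 0 < P (Aev ℓ θ t))
    (θstar : EuclideanSpace ℝ (Fin m)) (tstar : ℝ) (hθstar : θstar ∈ Δm)
    (hbdd : BddBelow (Set.range fun θ' : Δm =>
      ∫ d, ℓ (θ' : EuclideanSpace ℝ (Fin m)) d ∂(P[|Aev ℓ θ t]))) :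
    Galpha P ℓ α θ t - Galpha P ℓ α θstar tstar ≤
      (tstar - t) * (α⁻¹ * (P (Aev ℓ θ t)).toReal - 1) +
        α⁻¹ * (P (Aev ℓ θ t)).toReal *
          ((∫ d, ℓ θ d ∂(P[|Aev ℓ θ t])) - lstar P ℓ Δm θ t) := by
  obtain ⟨hα0, hα1⟩ := hα
  have hαinv : (0:ℝ) < α⁻¹ := inv_pos.mpr hα0
  set A := Aev ℓ θ t with hAdef
  have MA : MeasurableSet A := by
    have : A = {d | t < ℓ θ d} := by
      ext d; simp [hAdef, Aev, sub_pos]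
    rw [this]
    exact measurableSet_lt measurable_const (hmeas θ)
  have hAne : P A ≠ ⊤ := measure_ne_top P A
  set pA := (P A).toReal with hpAdef
  have hpA : 0 < pA := ENNReal.toReal_pos hA.ne' hAne
  -- conditional expectation formula
  have hcond : ∀ θ', (∫ d, ℓ θ' d ∂(P[|A])) = pA⁻¹ * ∫ d in A, ℓ θ' d ∂P := by
    intro θ'
    rw [ProbabilityTheory.cond, integral_smul_measure, smul_eq_mul,
      ENNReal.toReal_inv]
  -- Galpha expansion
  have hGal : ∀ θ' t', Galpha P ℓ α θ' t'
      = t' + α⁻¹ * ∫ d, max (ℓ θ' d - t') 0 ∂P := by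
    intro θ' t'
    have hi : Integrable (fun d => max (ℓ θ' d - t') 0) P :=
      ((hint θ').sub (integrable_const t')).pos_part
    rw [Galpha, integral_add (integrable_const t') (hi.const_mul α⁻¹),
      integral_const, integral_const_mul]
    simp
  -- step 1: the θ side, with equality
  have h1 : (∫ d, max (ℓ θ d - t) 0 ∂P) = ∫ d in A, (ℓ θ d - t) ∂P := by
    rw [← integral_indicator MA]
    refine integral_congr_ae (Filter.Eventually.of_forall fun d => ?_)
    by_cases hd : d ∈ A
    · have : 0 < ℓ θ d - t := hd
      simp [Set.indicator_of_mem hd, max_eq_left this.le]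
    · have : ¬ (0 < ℓ θ d - t) := hd
      push_neg at this
      simp [Set.indicator_of_notMem hd, max_eq_right this]
  -- step 2: the θstar side, with inequality
  have h2 : (∫ d in A, (ℓ θstar d - tstar) ∂P) ≤ ∫ d, max (ℓ θstar d - tstar) 0 ∂P := by
    rw [← integral_indicator MA]
    refine integral_mono (((hint θstar).sub (integrable_const tstar)).indicator MA)
      ((hint θstar).sub (integrable_const tstar)).pos_part fun d => ?_
    by_cases hd : d ∈ A
    · simp [Set.indicator_of_mem hd, le_max_left]
    · simp [Set.indicator_of_notMem hd, le_max_right]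
  -- splitting set integrals
  have hsplit : ∀ θ' t', (∫ d in A, (ℓ θ' d - t') ∂P)
      = (∫ d in A, ℓ θ' d ∂P) - t' * pA := by
    intro θ' t'
    rw [integral_sub ((hint θ').restrict) (integrable_const t'), integral_const]
    simp [Measure.restrict_apply_univ, hpAdef, smul_eq_mul, mul_comm, measureReal_def]
  -- lstar bound
  have hl : lstar P ℓ Δm θ t ≤ ∫ d, ℓ θstar d ∂(P[|A]) := by
    have := ciInf_le hbdd (⟨θstar, hθstar⟩ : Δm)
    simpa [lstar] using this
  have hEθ : pA * (∫ d, ℓ θ d ∂(P[|A])) = ∫ d in A, ℓ θ d ∂P := by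
    rw [hcond θ]; field_simp
  have hEθs : pA * (∫ d, ℓ θstar d ∂(P[|A])) = ∫ d in A, ℓ θstar d ∂P := by
    rw [hcond θstar]; field_simp
  have hls : pA * lstar P ℓ Δm θ t ≤ ∫ d in A, ℓ θstar d ∂P := by
    rw [← hEθs]
    exact mul_le_mul_of_nonneg_left hl hpA.le
  have hG1 : Galpha P ℓ α θ t = t + α⁻¹ * ((∫ d in A, ℓ θ d ∂P) - t * pA) := by
    rw [hGal, h1, hsplit]
  have hG2 : tstar + α⁻¹ * ((∫ d in A, ℓ θstar d ∂P) - tstar * pA)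
      ≤ Galpha P ℓ α θstar tstar := by
    rw [hGal]
    have := hsplit θstar tstar
    nlinarith [mul_le_mul_of_nonneg_left h2 hαinv.le]
  have hls' := mul_le_mul_of_nonneg_left hls hαinv.le
  nlinarith [hG1, hG2, hEθ]
end

section
/- Let Z be an integrable real random variable, let W be independent of Z with distribution N(0, σ²), σ > 0, and fix α ∈ (0,1]. Then CV@R^α(Z) ≤ CV@R^α(Z − W) ≤ CV@R^α(Z) + σ/(α·√(2π)). -/
open MeasureTheory ProbabilityTheory Real Set Filter
open scoped NNReal ENNReal

lemma aux_int_Ioi {b : ℝ} (hb : 0 < b) :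
    ∫ x in Set.Ioi (0:ℝ), x * Real.exp (-b * x ^ 2) = (2 * b)⁻¹ := by
  have hderiv : ∀ x ∈ Set.Ici (0:ℝ),
      HasDerivAt (fun x : ℝ => -(2*b)⁻¹ * Real.exp (-b * x ^ 2))
        (x * Real.exp (-b * x ^ 2)) x := by
    intro x _
    have h1 : HasDerivAt (fun x : ℝ => -b * x ^ 2) (-b * (2 * x)) x := by
      simpa [mul_comm] using (hasDerivAt_pow 2 x).const_mul (-b)
    have h2 := h1.exp.const_mul (-(2*b)⁻¹)
    exact h2.congr_deriv (by field_simp)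
  have hint : IntegrableOn (fun x : ℝ => x * Real.exp (-b * x ^ 2)) (Set.Ioi 0) :=
    (integrable_mul_exp_neg_mul_sq hb).integrableOn
  have htend : Tendsto (fun x : ℝ => -(2*b)⁻¹ * Real.exp (-b * x ^ 2)) atTop (nhds 0) := by
    rw [show (0:ℝ) = -(2*b)⁻¹ * 0 by ring]
    have h2 : Tendsto (fun x : ℝ => -b * x ^ 2) atTop atBot :=
      (tendsto_pow_atTop (two_ne_zero)).const_mul_atTop_of_neg (by linarith)
    exact Tendsto.const_mul _
      (by simpa [Function.comp_def] using Real.tendsto_exp_atBot.comp h2)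
  have := integral_Ioi_of_hasDerivAt_of_tendsto' hderiv hint htend
  simp only [ne_eq, OfNat.ofNat_ne_zero, not_false_eq_true, zero_pow, mul_zero, Real.exp_zero] at this
  rw [this]
  norm_num

lemma gauss_integrable_iff {v : ℝ≥0} (hv : v ≠ 0) (f : ℝ → ℝ) :
    Integrable f (gaussianReal 0 v) ↔
      Integrable (fun x => f x * gaussianPDFReal 0 v x) volume := by
  rw [gaussianReal_of_var_ne_zero 0 hv, gaussianPDF_def,
    integrable_withDensity_iff ((measurable_gaussianPDFReal 0 v).ennreal_ofReal)
      (ae_of_all _ fun x => ENNReal.ofReal_lt_top)]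
  constructor <;> intro h <;> refine h.congr (ae_of_all _ fun x => ?_) <;>
    simp [ENNReal.toReal_ofReal (gaussianPDFReal_nonneg 0 v x)]

lemma gauss_integral_eq {v : ℝ≥0} (hv : v ≠ 0) (f : ℝ → ℝ) :
    ∫ x, f x ∂(gaussianReal 0 v) = ∫ x, f x * gaussianPDFReal 0 v x := by
  rw [gaussianReal_of_var_ne_zero 0 hv, gaussianPDF_def]
  have h : (fun x => ENNReal.ofReal (gaussianPDFReal 0 v x))
      = fun x => ((gaussianPDFReal 0 v x).toNNReal : ℝ≥0∞) := rfl
  rw [h, integral_withDensity_eq_integral_smul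
    ((measurable_gaussianPDFReal 0 v).real_toNNReal) f]
  congr 1
  ext x
  simp [NNReal.smul_def, Real.coe_toNNReal _ (gaussianPDFReal_nonneg 0 v x), mul_comm]

section Moments

variable {σ : ℝ}

lemma v_ne (hσ : 0 < σ) : Real.toNNReal (σ ^ 2) ≠ 0 := by
  simp only [ne_eq, Real.toNNReal_eq_zero, not_le]
  positivity

lemma pdf_eq (hσ : 0 < σ) :
    gaussianPDFReal 0 (Real.toNNReal (σ ^ 2)) =
      fun x => (Real.sqrt (2 * π))⁻¹ * σ⁻¹ * Real.exp (-(2 * σ ^ 2)⁻¹ * x ^ 2) := by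
  funext x
  rw [gaussianPDFReal]
  have hcoe : ((Real.toNNReal (σ ^ 2)) : ℝ) = σ ^ 2 := Real.coe_toNNReal _ (sq_nonneg σ)
  rw [hcoe]
  have h1 : Real.sqrt (2 * π * σ ^ 2) = Real.sqrt (2 * π) * σ := by
    rw [Real.sqrt_mul (by positivity), Real.sqrt_sq hσ.le]
  rw [h1, mul_inv]
  congr 1
  rw [sub_zero]
  congr 1
  field_simp

lemma gauss_integrable_id (hσ : 0 < σ) :
    Integrable (fun x => x) (gaussianReal 0 (Real.toNNReal (σ ^ 2))) := by
  rw [gauss_integrable_iff (v_ne hσ), pdf_eq hσ]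
  have hb : 0 < (2 * σ ^ 2)⁻¹ := by positivity
  have base := (integrable_mul_exp_neg_mul_sq hb).const_mul ((Real.sqrt (2 * π))⁻¹ * σ⁻¹)
  exact base.congr (ae_of_all _ fun x => by ring)

lemma gauss_integral_id (hσ : 0 < σ) :
    ∫ x, x ∂(gaussianReal 0 (Real.toNNReal (σ ^ 2))) = 0 := by
  rw [gauss_integral_eq (v_ne hσ), pdf_eq hσ]
  have h := MeasureTheory.integral_neg_eq_self
    (fun x : ℝ => x * ((Real.sqrt (2 * π))⁻¹ * σ⁻¹ * Real.exp (-(2 * σ ^ 2)⁻¹ * x ^ 2)))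
    (volume : Measure ℝ)
  simp only [neg_neg, neg_sq, neg_mul, integral_neg] at h
  simp only [neg_mul] at h ⊢
  linarith [h]

lemma gauss_integral_negpart (hσ : 0 < σ) :
    ∫ x, max (-x) 0 ∂(gaussianReal 0 (Real.toNNReal (σ ^ 2)))
      = σ / Real.sqrt (2 * π) := by
  rw [gauss_integral_eq (v_ne hσ), pdf_eq hσ]
  set b : ℝ := (2 * σ ^ 2)⁻¹ with hbdef
  have hb : 0 < b := by positivity
  set c : ℝ := (Real.sqrt (2 * π))⁻¹ * σ⁻¹ with hcdef
  have h := MeasureTheory.integral_neg_eq_self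
    (fun x : ℝ => max (-x) 0 * (c * Real.exp (-b * x ^ 2))) (volume : Measure ℝ)
  simp only [neg_neg, neg_sq] at h
  rw [← h]
  have h2 : (fun x : ℝ => max x 0 * (c * Real.exp (-b * x ^ 2)))
      = Set.indicator (Set.Ioi 0) (fun x : ℝ => x * (c * Real.exp (-b * x ^ 2))) := by
    funext x
    by_cases hx : 0 < x
    · rw [Set.indicator_of_mem (show x ∈ Set.Ioi 0 from hx), max_eq_left hx.le]
    · rw [Set.indicator_of_notMem (show x ∉ Set.Ioi 0 from hx),
        max_eq_right (not_lt.mp hx), zero_mul]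
  rw [h2, integral_indicator measurableSet_Ioi]
  have h3 : ∀ x : ℝ, x * (c * Real.exp (-b * x ^ 2)) = c * (x * Real.exp (-b * x ^ 2)) := by
    intro x; ring
  simp_rw [h3]
  rw [MeasureTheory.integral_const_mul, aux_int_Ioi hb]
  have hsq : Real.sqrt (2 * π) ≠ 0 := by
    positivity
  rw [hbdef, hcdef]
  rw [show (2 * (2 * σ ^ 2)⁻¹)⁻¹ = σ ^ 2 by field_simp]
  field_simp

lemma gauss_integrable_negpart (hσ : 0 < σ) :
    Integrable (fun x => max (-x) 0) (gaussianReal 0 (Real.toNNReal (σ ^ 2))) :=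
  (gauss_integrable_id hσ).neg.pos_part

end Moments


/-- Conditional Value-at-Risk at level `α ∈ (0,1]` of a real random variable `Z` on `(Ω, Q)`:
`CV@R^α(Z) = inf_t { t + (1/α)·E[(Z - t)₊] }`. -/
noncomputable def cvar {Ω : Type*} [MeasurableSpace Ω] (Q : Measure Ω)
    (α : ℝ) (Z : Ω → ℝ) : ℝ :=
  ⨅ t : ℝ, (t + α⁻¹ * ∫ ω, max (Z ω - t) 0 ∂Q)

/-- If `Z` is integrable and `W ~ N(0,σ²)` (`σ > 0`) is independent of `Z`,
then for every `α ∈ (0,1]`, `CV@R^α(Z) ≤ CV@R^α(Z - W) ≤ CV@R^α(Z) + σ/(α√(2π))`. -/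
theorem cvar_gaussian_smoothing_bounds
    {Ω : Type*} [MeasurableSpace Ω] (Q : Measure Ω) [IsProbabilityMeasure Q]
    (Z W : Ω → ℝ) (hZmeas : Measurable Z) (hW : Measurable W)
    (hZ : Integrable Z Q)
    (hindep : IndepFun Z W Q)
    (σ : ℝ) (hσ : 0 < σ)
    (hgauss : Measure.map W Q = gaussianReal 0 (Real.toNNReal (σ ^ 2)))
    (α : ℝ) (hα : α ∈ Set.Ioc (0 : ℝ) 1) :
    cvar Q α Z ≤ cvar Q α (fun ω => Z ω - W ω) ∧
    cvar Q α (fun ω => Z ω - W ω) ≤ cvar Q α Z + σ / (α * Real.sqrt (2 * Real.pi)) := by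
  obtain ⟨hα0, hα1⟩ := hα
  have hαne : α ≠ 0 := ne_of_gt hα0
  have hαinv0 : (0:ℝ) < α⁻¹ := by positivity
  have hαinv1 : (1:ℝ) ≤ α⁻¹ := by
    nlinarith [mul_inv_cancel₀ hαne]
  set μW := gaussianReal 0 (Real.toNNReal (σ ^ 2)) with hμWdef
  set μZ := Measure.map Z Q with hμZdef
  set c := σ / Real.sqrt (2 * Real.pi) with hcdef
  have hcnonneg : 0 ≤ c := by positivity
  -- W is integrable with mean 0
  have hμWid : Integrable (fun w => w) μW := gauss_integrable_id hσ
  have hμWmean : ∫ w, w ∂μW = 0 := gauss_integral_id hσ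
  have hμWneg : ∫ w, max (-w) 0 ∂μW = c := gauss_integral_negpart hσ
  have hμWnegint : Integrable (fun w => max (-w) 0) μW := gauss_integrable_negpart hσ
  have hWQint : Integrable W Q := by
    have h := hμWid
    rw [← hgauss] at h
    exact (integrable_map_measure aestronglyMeasurable_id hW.aemeasurable).mp h
  -- per-t integrability
  have I1 : ∀ t : ℝ, Integrable (fun ω => max (Z ω - t) 0) Q :=
    fun t => (hZ.sub (integrable_const t)).pos_part
  have hZW : Integrable (fun ω => Z ω - W ω) Q := hZ.sub hWQint
  have I2 : ∀ t : ℝ, Integrable (fun ω => max (Z ω - W ω - t) 0) Q :=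
    fun t => (hZW.sub (integrable_const t)).pos_part
  -- Fubini
  have hpairmeas : Measurable fun ω => (Z ω, W ω) := hZmeas.prodMk hW
  have hprod : Measure.map (fun ω => (Z ω, W ω)) Q = μZ.prod μW := by
    rw [hμZdef, ← hgauss]
    exact (indepFun_iff_map_prod_eq_prod_map_map hZmeas.aemeasurable hW.aemeasurable).mp hindep
  have hμZprob : IsProbabilityMeasure μZ := Measure.isProbabilityMeasure_map hZmeas.aemeasurable
  have φcont : ∀ t : ℝ, Continuous (fun p : ℝ × ℝ => max (p.1 - p.2 - t) 0) :=
    fun t => ((continuous_fst.sub continuous_snd).sub continuous_const).max continuous_const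
  have hint : ∀ t : ℝ, Integrable (fun p : ℝ × ℝ => max (p.1 - p.2 - t) 0) (μZ.prod μW) := by
    intro t
    rw [← hprod]
    exact (integrable_map_measure (φcont t).aestronglyMeasurable
      hpairmeas.aemeasurable).mpr (I2 t)
  have key : ∀ t : ℝ, ∫ ω, max (Z ω - W ω - t) 0 ∂Q
      = ∫ z, ∫ w, max (z - w - t) 0 ∂μW ∂μZ := by
    intro t
    have h1 : ∫ ω, max (Z ω - W ω - t) 0 ∂Q
        = ∫ p : ℝ × ℝ, max (p.1 - p.2 - t) 0 ∂(Measure.map (fun ω => (Z ω, W ω)) Q) := by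
      rw [integral_map hpairmeas.aemeasurable (φcont t).aestronglyMeasurable]
    rw [h1, hprod, integral_prod _ (hint t)]
  -- inner integrability
  have innerint : ∀ t z : ℝ, Integrable (fun w => max (z - w - t) 0) μW := by
    intro t z
    have h := ((integrable_const (z - t)).sub hμWid).pos_part
    exact h.congr (ae_of_all _ fun w => by norm_num; ring_nf)
  -- inner bounds
  have innerlow : ∀ t z : ℝ, max (z - t) 0 ≤ ∫ w, max (z - w - t) 0 ∂μW := by
    intro t z
    refine max_le ?_ (integral_nonneg fun w => le_max_right _ _)
    have h1 : ∫ w, (z - t - w) ∂μW = z - t := by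
      rw [integral_sub (integrable_const _) hμWid, integral_const, hμWmean]
      simp
    calc z - t = ∫ w, (z - t - w) ∂μW := h1.symm
      _ ≤ ∫ w, max (z - w - t) 0 ∂μW := by
          refine integral_mono ((integrable_const _).sub hμWid) (innerint t z) fun w => ?_
          exact le_trans (le_of_eq (by ring)) (le_max_left (z - w - t) 0)
  have innerhigh : ∀ t z : ℝ, ∫ w, max (z - w - t) 0 ∂μW ≤ max (z - t) 0 + c := by
    intro t z
    have hptw : ∀ w : ℝ, max (z - w - t) 0 ≤ max (z - t) 0 + max (-w) 0 := by
      intro w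
      refine max_le ?_ (by positivity)
      calc z - w - t = (z - t) + (-w) := by ring
        _ ≤ max (z - t) 0 + max (-w) 0 := add_le_add (le_max_left _ _) (le_max_left _ _)
    calc ∫ w, max (z - w - t) 0 ∂μW
        ≤ ∫ w, (max (z - t) 0 + max (-w) 0) ∂μW :=
          integral_mono (innerint t z) ((integrable_const _).add hμWnegint) hptw
      _ = max (z - t) 0 + c := by
          rw [integral_add (integrable_const _) hμWnegint, integral_const, hμWneg]
          simp
  -- marginal integrability / transfer
  have houter : ∀ t : ℝ, Integrable (fun z => ∫ w, max (z - w - t) 0 ∂μW) μZ :=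
    fun t => (hint t).integral_prod_left
  have hgmax : ∀ t : ℝ, AEStronglyMeasurable (fun z : ℝ => max (z - t) 0) (Measure.map Z Q) :=
    fun t => ((measurable_id'.sub measurable_const).max measurable_const).aestronglyMeasurable
  have hmapZmaxint : ∀ t : ℝ, Integrable (fun z => max (z - t) 0) μZ := by
    intro t
    exact (integrable_map_measure (hgmax t) hZmeas.aemeasurable).mpr (I1 t)
  have hmapZmax : ∀ t : ℝ, ∫ z, max (z - t) 0 ∂μZ = ∫ ω, max (Z ω - t) 0 ∂Q := by
    intro t
    rw [hμZdef, integral_map hZmeas.aemeasurable (hgmax t)]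
  -- the two integral bounds
  have bound1 : ∀ t : ℝ, ∫ ω, max (Z ω - t) 0 ∂Q ≤ ∫ ω, max (Z ω - W ω - t) 0 ∂Q := by
    intro t
    rw [key t, ← hmapZmax t]
    exact integral_mono (hmapZmaxint t) (houter t) fun z => innerlow t z
  have bound2 : ∀ t : ℝ, ∫ ω, max (Z ω - W ω - t) 0 ∂Q ≤ ∫ ω, max (Z ω - t) 0 ∂Q + c := by
    intro t
    rw [key t, ← hmapZmax t]
    calc ∫ z, ∫ w, max (z - w - t) 0 ∂μW ∂μZ
        ≤ ∫ z, (max (z - t) 0 + c) ∂μZ :=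
          integral_mono (houter t) ((hmapZmaxint t).add (integrable_const c))
            fun z => innerhigh t z
      _ = ∫ z, max (z - t) 0 ∂μZ + c := by
          rw [integral_add (hmapZmaxint t) (integrable_const c), integral_const]
          simp
  -- lower bound for the infimand
  have lowerb : ∀ (Y : Ω → ℝ), Integrable Y Q → ∀ t : ℝ,
      ∫ ω, Y ω ∂Q ≤ t + α⁻¹ * ∫ ω, max (Y ω - t) 0 ∂Q := by
    intro Y hY t
    have h0 : 0 ≤ ∫ ω, max (Y ω - t) 0 ∂Q := integral_nonneg fun ω => le_max_right _ _
    have h1 : ∫ ω, Y ω ∂Q - t ≤ ∫ ω, max (Y ω - t) 0 ∂Q := by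
      have h2 : ∫ ω, (Y ω - t) ∂Q ≤ ∫ ω, max (Y ω - t) 0 ∂Q :=
        integral_mono (hY.sub (integrable_const t)) (hY.sub (integrable_const t)).pos_part
          fun ω => le_max_left _ _
      rwa [integral_sub hY (integrable_const t), integral_const, probReal_univ,
        one_smul] at h2
    rcases le_or_gt (∫ ω, Y ω ∂Q) t with h | h
    · nlinarith [mul_nonneg hαinv0.le h0]
    · nlinarith [le_mul_of_one_le_left h0 hαinv1]
  have bddF : BddBelow (Set.range fun t : ℝ => t + α⁻¹ * ∫ ω, max (Z ω - t) 0 ∂Q) :=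
    ⟨∫ ω, Z ω ∂Q, by rintro x ⟨t, rfl⟩; exact lowerb Z hZ t⟩
  have bddG : BddBelow (Set.range fun t : ℝ => t + α⁻¹ * ∫ ω, max (Z ω - W ω - t) 0 ∂Q) :=
    ⟨∫ ω, (Z ω - W ω) ∂Q, by rintro x ⟨t, rfl⟩; exact lowerb (fun ω => Z ω - W ω) hZW t⟩
  simp only [cvar]
  constructor
  · refine le_ciInf fun t => ?_
    calc (⨅ t : ℝ, (t + α⁻¹ * ∫ ω, max (Z ω - t) 0 ∂Q))
        ≤ t + α⁻¹ * ∫ ω, max (Z ω - t) 0 ∂Q := ciInf_le bddF t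
      _ ≤ t + α⁻¹ * ∫ ω, max (Z ω - W ω - t) 0 ∂Q := by
          have := mul_le_mul_of_nonneg_left (bound1 t) hαinv0.le
          linarith
  · have hkey : ∀ t : ℝ,
        (⨅ t : ℝ, (t + α⁻¹ * ∫ ω, max (Z ω - W ω - t) 0 ∂Q)) - α⁻¹ * c
          ≤ t + α⁻¹ * ∫ ω, max (Z ω - t) 0 ∂Q := by
      intro t
      have h1 := ciInf_le bddG t
      have h2 := mul_le_mul_of_nonneg_left (bound2 t) hαinv0.le
      rw [mul_add] at h2
      linarith
    have h3 := le_ciInf hkey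
    have hfinal : α⁻¹ * c = σ / (α * Real.sqrt (2 * Real.pi)) := by
      rw [hcdef]
      have hsq : Real.sqrt (2 * Real.pi) ≠ 0 := by positivity
      field_simp
    linarith
end

section
/- Fix α ∈ (0,1], σ > 0 and t ∈ ℝ. Suppose that for P-almost every d ∈ D, the map θ ↦ ℓ(θ,d) is differentiable, G-Lipschitz, and has L-Lipschitz gradient on ℝ^m, and that ∇_θ ℓ(θ,·) is P-integrable for every θ. Then the map θ ↦ (1/α)·E_P[ Φ( (ℓ(θ,d) − t)/σ )·∇_θ ℓ(θ,d) ] is Lipschitz on ℝ^m with Lipschitz constant L' := (L·σ·√(2π) + G²)/(α·σ·√(2π)). (This map is the θ-gradient of the Gaussian-smoothed CV@R objective (θ,t) ↦ E[ t + (1/α)·(ℓ(θ,d) − w − t)_+ ] with w ~ N(0,σ²) independent of d.) -/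
open MeasureTheory

/-- The standard Gaussian cumulative distribution function
`Φ(u) = ∫_{-∞}^u (2π)^{-1/2} e^{-s²/2} ds`. -/
noncomputable def stdGaussianCDF (u : ℝ) : ℝ :=
  ∫ s in Set.Iic u, (Real.sqrt (2 * Real.pi))⁻¹ * Real.exp (-s ^ 2 / 2)

open Set

lemma gaussDen_integrable :
    Integrable (fun s : ℝ => (Real.sqrt (2 * Real.pi))⁻¹ * Real.exp (-s ^ 2 / 2)) := by
  have h := (integrable_exp_neg_mul_sq (by norm_num : (0:ℝ) < 1/2)).const_mul
      (Real.sqrt (2 * Real.pi))⁻¹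
  simpa only [show ∀ s : ℝ, -(1/2 : ℝ) * s ^ 2 = -s ^ 2 / 2 from fun s => by ring] using h

lemma gaussDen_nonneg (s : ℝ) :
    0 ≤ (Real.sqrt (2 * Real.pi))⁻¹ * Real.exp (-s ^ 2 / 2) := by positivity

lemma stdGaussianCDF_nonneg (u : ℝ) : 0 ≤ stdGaussianCDF u :=
  integral_nonneg fun s => gaussDen_nonneg s

lemma stdGaussianCDF_le_one (u : ℝ) : stdGaussianCDF u ≤ 1 := by
  have h1 : stdGaussianCDF u ≤ ∫ s : ℝ, (Real.sqrt (2 * Real.pi))⁻¹ * Real.exp (-s ^ 2 / 2) :=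
    setIntegral_le_integral gaussDen_integrable (Filter.Eventually.of_forall gaussDen_nonneg)
  have h2 : ∫ s : ℝ, (Real.sqrt (2 * Real.pi))⁻¹ * Real.exp (-s ^ 2 / 2) = 1 := by
    rw [integral_const_mul]
    have h3 : ∫ s : ℝ, Real.exp (-s ^ 2 / 2) = Real.sqrt (Real.pi / (1/2)) := by
      rw [← integral_gaussian (1/2)]
      congr 1 with s; congr 1; ring
    rw [h3, show Real.pi / (1/2) = 2 * Real.pi by ring]
    rw [inv_mul_cancel₀]
    positivity
  linarith

lemma stdGaussianCDF_lipschitz (u v : ℝ) :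
    |stdGaussianCDF u - stdGaussianCDF v| ≤ (Real.sqrt (2 * Real.pi))⁻¹ * |u - v| := by
  unfold stdGaussianCDF
  rw [intervalIntegral.integral_Iic_sub_Iic gaussDen_integrable.integrableOn gaussDen_integrable.integrableOn]
  have := intervalIntegral.norm_integral_le_of_norm_le_const
    (a := v) (b := u) (C := (Real.sqrt (2 * Real.pi))⁻¹)
    (f := fun s => (Real.sqrt (2 * Real.pi))⁻¹ * Real.exp (-s ^ 2 / 2)) ?_
  · rwa [Real.norm_eq_abs] at this
  · intro x _
    rw [Real.norm_eq_abs, abs_mul, abs_of_nonneg (by positivity : (0:ℝ) ≤ (Real.sqrt (2 * Real.pi))⁻¹),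
      abs_of_nonneg (Real.exp_nonneg _)]
    nlinarith [Real.exp_le_one_iff.mpr (by nlinarith [sq_nonneg x] : -x ^ 2 / 2 ≤ 0),
      inv_nonneg.mpr (Real.sqrt_nonneg (2 * Real.pi))]

lemma stdGaussianCDF_monotone : Monotone stdGaussianCDF := by
  intro u v huv
  exact setIntegral_mono_set gaussDen_integrable.integrableOn
    (Filter.Eventually.of_forall gaussDen_nonneg)
    (HasSubset.Subset.eventuallyLE (Iic_subset_Iic.mpr huv))

lemma stdGaussianCDF_measurable : Measurable stdGaussianCDF :=
  stdGaussianCDF_monotone.measurable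

/-- Fix `α ∈ (0,1]`, `σ > 0`, `t ∈ ℝ`. If for `P`-a.e. `d` the loss
`θ ↦ ℓ θ d` is differentiable with gradient `g θ d`, `G`-Lipschitz, and has `L`-Lipschitz
gradient, with integrable gradients, then the `θ`-gradient of the Gaussian-smoothed CV@R
objective, `θ ↦ (1/α)·E_P[Φ((ℓ(θ,d) - t)/σ)·∇ℓ(θ,d)]`, is Lipschitz with constant
`L' = (Lσ√(2π) + G²)/(ασ√(2π))`. -/
theorem smoothed_cvar_gradient_lipschitz
    {m : ℕ} {D : Type*} [MeasurableSpace D]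
    (P : Measure D) [IsProbabilityMeasure P]
    (ℓ : EuclideanSpace ℝ (Fin m) → D → ℝ)
    (g : EuclideanSpace ℝ (Fin m) → D → EuclideanSpace ℝ (Fin m))
    (hmeas : ∀ θ, Measurable (ℓ θ))
    (hintℓ : ∀ θ, Integrable (ℓ θ) P)
    (hintg : ∀ θ, Integrable (g θ) P)
    (α σ t : ℝ) (hα : α ∈ Set.Ioc (0 : ℝ) 1) (hσ : 0 < σ)
    (G L : ℝ)
    (hdiff : ∀ᵐ d ∂P, ∀ θ, HasGradientAt (fun θ' => ℓ θ' d) (g θ d) θ)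
    (hGlip : ∀ᵐ d ∂P, ∀ θ θ', |ℓ θ d - ℓ θ' d| ≤ G * ‖θ - θ'‖)
    (hLlip : ∀ᵐ d ∂P, ∀ θ θ', ‖g θ d - g θ' d‖ ≤ L * ‖θ - θ'‖) :
    ∀ θ θ' : EuclideanSpace ℝ (Fin m),
      ‖(α⁻¹ • ∫ d, stdGaussianCDF ((ℓ θ d - t) / σ) • g θ d ∂P) -
          α⁻¹ • ∫ d, stdGaussianCDF ((ℓ θ' d - t) / σ) • g θ' d ∂P‖ ≤
        (L * σ * Real.sqrt (2 * Real.pi) + G ^ 2) / (α * σ * Real.sqrt (2 * Real.pi)) *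
          ‖θ - θ'‖ := by
  intro θ θ'
  obtain ⟨hα0, hα1⟩ := hα
  set c1 := Real.sqrt (2 * Real.pi) with hc1def
  have hc1 : 0 < c1 := Real.sqrt_pos.mpr (by positivity)
  rcases subsingleton_or_nontrivial (EuclideanSpace ℝ (Fin m)) with hs | hn
  · have h1 : θ = θ' := Subsingleton.elim _ _
    subst h1
    simp
  -- nonnegativity of the constants
  obtain ⟨d0, hd0G, hd0L⟩ := (hGlip.and hLlip).exists
  obtain ⟨x0, hx0⟩ := exists_ne (0 : EuclideanSpace ℝ (Fin m))
  have hx0p : 0 < ‖x0 - 0‖ := by simpa [sub_zero] using norm_pos_iff.mpr hx0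
  have hG : 0 ≤ G := by
    have h := hd0G x0 0
    nlinarith [abs_nonneg (ℓ x0 d0 - ℓ 0 d0)]
  have hL : 0 ≤ L := by
    have h := hd0L x0 0
    nlinarith [norm_nonneg (g x0 d0 - g 0 d0)]
  -- a.e. bound on gradient norm
  have hgb : ∀ᵐ d ∂P, ∀ ϑ, ‖g ϑ d‖ ≤ G := by
    filter_upwards [hdiff, hGlip] with d hd hg
    intro ϑ
    have hlip : LipschitzWith (Real.toNNReal G) (fun θ'' => ℓ θ'' d) := by
      apply LipschitzWith.of_dist_le_mul
      intro a b
      rw [Real.coe_toNNReal G hG, Real.dist_eq, dist_eq_norm]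
      exact hg a b
    have h2 := (hd ϑ).hasFDerivAt.le_of_lipschitz hlip
    rw [Real.coe_toNNReal G hG] at h2
    simpa using h2
  -- pointwise bound
  set C : ℝ := L + G ^ 2 / (σ * c1) with hCdef
  have key : ∀ᵐ d ∂P,
      ‖stdGaussianCDF ((ℓ θ d - t) / σ) • g θ d -
        stdGaussianCDF ((ℓ θ' d - t) / σ) • g θ' d‖ ≤ C * ‖θ - θ'‖ := by
    filter_upwards [hGlip, hLlip, hgb] with d hGd hLd hgbd
    set a := stdGaussianCDF ((ℓ θ d - t) / σ)
    set b := stdGaussianCDF ((ℓ θ' d - t) / σ)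
    have hsplit : a • g θ d - b • g θ' d = a • (g θ d - g θ' d) + (a - b) • g θ' d := by
      module
    rw [hsplit]
    have h1 : ‖a • (g θ d - g θ' d)‖ ≤ 1 * (L * ‖θ - θ'‖) := by
      rw [norm_smul, Real.norm_eq_abs, abs_of_nonneg (stdGaussianCDF_nonneg _)]
      exact mul_le_mul (stdGaussianCDF_le_one _) (hLd θ θ') (norm_nonneg _)
        zero_le_one
    have h2 : ‖(a - b) • g θ' d‖ ≤ (c1⁻¹ * (G * ‖θ - θ'‖ / σ)) * G := by
      rw [norm_smul, Real.norm_eq_abs]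
      apply mul_le_mul _ (hgbd θ') (norm_nonneg _)
      · positivity
      · refine (stdGaussianCDF_lipschitz _ _).trans ?_
        rw [← hc1def]
        apply mul_le_mul_of_nonneg_left _ (by positivity)
        rw [div_sub_div_same, abs_div, abs_of_pos hσ, div_le_div_iff_of_pos_right hσ]
        simpa using hGd θ θ'
    calc ‖a • (g θ d - g θ' d) + (a - b) • g θ' d‖
        ≤ ‖a • (g θ d - g θ' d)‖ + ‖(a - b) • g θ' d‖ := norm_add_le _ _
      _ ≤ 1 * (L * ‖θ - θ'‖) + (c1⁻¹ * (G * ‖θ - θ'‖ / σ)) * G := add_le_add h1 h2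
      _ = C * ‖θ - θ'‖ := by
          rw [hCdef]; field_simp
  -- integrability
  have hint : ∀ ϑ : EuclideanSpace ℝ (Fin m),
      Integrable (fun d => stdGaussianCDF ((ℓ ϑ d - t) / σ) • g ϑ d) P := by
    intro ϑ
    have hm : Measurable fun d => stdGaussianCDF ((ℓ ϑ d - t) / σ) :=
      stdGaussianCDF_measurable.comp (((hmeas ϑ).sub_const t).div_const σ)
    refine (hintg ϑ).mono (hm.aestronglyMeasurable.smul (hintg ϑ).aestronglyMeasurable) ?_
    filter_upwards with d
    rw [norm_smul, Real.norm_eq_abs, abs_of_nonneg (stdGaussianCDF_nonneg _)]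
    exact mul_le_of_le_one_left (norm_nonneg _) (stdGaussianCDF_le_one _)
  -- assemble
  rw [← smul_sub, norm_smul, Real.norm_eq_abs, abs_of_pos (inv_pos.mpr hα0),
    ← integral_sub (hint θ) (hint θ')]
  have hnorm : ‖∫ d, (stdGaussianCDF ((ℓ θ d - t) / σ) • g θ d -
      stdGaussianCDF ((ℓ θ' d - t) / σ) • g θ' d) ∂P‖ ≤ C * ‖θ - θ'‖ := by
    have := norm_integral_le_of_norm_le (g := fun _ => C * ‖θ - θ'‖)
      (integrable_const _) key
    simpa using this
  calc α⁻¹ * ‖∫ d, (stdGaussianCDF ((ℓ θ d - t) / σ) • g θ d -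
        stdGaussianCDF ((ℓ θ' d - t) / σ) • g θ' d) ∂P‖
      ≤ α⁻¹ * (C * ‖θ - θ'‖) :=
        mul_le_mul_of_nonneg_left hnorm (by positivity)
    _ = (L * σ * c1 + G ^ 2) / (α * σ * c1) * ‖θ - θ'‖ := by
        rw [hCdef]; field_simp
end

section
/- Fix α ∈ (0,1] and μ > 0. If for P-almost every d ∈ D the map θ ↦ ℓ(θ,d) is μ-strongly convex on ℝ^m, and ℓ(θ,·) is P-integrable for every θ, then the map θ ↦ CV@R^α(ℓ(θ,·)) := inf_{t ∈ ℝ} { t + (1/α)·E_P[(ℓ(θ,d) − t)_+] } is real-valued and μ-strongly convex on ℝ^m. -/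
open MeasureTheory

/-- If the loss `θ ↦ ℓ θ d` is `μ`-strongly convex for `P`-a.e. example `d`
(`μ > 0`, i.e. `ℓ(·,d) - (μ/2)‖·‖²` is convex) and `ℓ θ` is `P`-integrable for every `θ`,
then `θ ↦ CV@R^α(ℓ(θ,·)) = inf_t { t + (1/α)·E_P[(ℓ(θ,d) - t)₊] }` is real-valued (the
infimum is over a set bounded below) and `μ`-strongly convex on `ℝ^m`, for `α ∈ (0,1]`. -/
theorem cvar_of_strongly_convex_loss_strongly_convex
    {m : ℕ} {D : Type*} [MeasurableSpace D]
    (P : Measure D) [IsProbabilityMeasure P]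
    (ℓ : EuclideanSpace ℝ (Fin m) → D → ℝ)
    (hmeas : ∀ θ, Measurable (ℓ θ))
    (hint : ∀ θ, Integrable (ℓ θ) P)
    (α : ℝ) (hα : α ∈ Set.Ioc (0 : ℝ) 1)
    (μ : ℝ) (hμ : 0 < μ)
    (hsc : ∀ᵐ d ∂P, ConvexOn ℝ Set.univ (fun θ => ℓ θ d - μ / 2 * ‖θ‖ ^ 2)) :
    (∀ θ, BddBelow (Set.range fun t : ℝ => t + α⁻¹ * ∫ d, max (ℓ θ d - t) 0 ∂P)) ∧
    ConvexOn ℝ Set.univ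
      (fun θ => (⨅ t : ℝ, (t + α⁻¹ * ∫ d, max (ℓ θ d - t) 0 ∂P)) - μ / 2 * ‖θ‖ ^ 2) := by
  obtain ⟨hα0, hα1⟩ := hα
  have hαinv : (1 : ℝ) ≤ α⁻¹ := one_le_inv_iff₀.mpr ⟨hα0, hα1⟩
  have hαinv0 : (0 : ℝ) ≤ α⁻¹ := by linarith
  -- integrability of the positive part
  have hI : ∀ θ (t : ℝ), Integrable (fun d => max (ℓ θ d - t) 0) P := fun θ t =>
    ((hint θ).sub (integrable_const t)).pos_part
  -- abbreviations
  set g : EuclideanSpace ℝ (Fin m) → ℝ → ℝ :=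
    fun θ t => t + α⁻¹ * ∫ d, max (ℓ θ d - t) 0 ∂P with hg
  -- lower bound
  have hbdd : ∀ θ, BddBelow (Set.range fun t : ℝ => g θ t) := by
    intro θ
    refine ⟨∫ d, ℓ θ d ∂P, ?_⟩
    rintro x ⟨t, rfl⟩
    have h1 : (∫ d, ℓ θ d ∂P) - t ≤ ∫ d, max (ℓ θ d - t) 0 ∂P := by
      have h2 : ∫ d, (ℓ θ d - t) ∂P ≤ ∫ d, max (ℓ θ d - t) 0 ∂P :=
        integral_mono ((hint θ).sub (integrable_const t)) (hI θ t)
          (fun d => le_max_left _ _)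
      rwa [integral_sub (hint θ) (integrable_const t), integral_const, probReal_univ,
        one_smul] at h2
    have h2 : (0 : ℝ) ≤ ∫ d, max (ℓ θ d - t) 0 ∂P :=
      integral_nonneg fun d => le_max_right _ _
    have h3 : (∫ d, max (ℓ θ d - t) 0 ∂P) ≤ α⁻¹ * ∫ d, max (ℓ θ d - t) 0 ∂P :=
      le_mul_of_one_le_left h2 hαinv
    simp only [hg]
    linarith
  refine ⟨hbdd, ?_⟩
  -- restate the a.e. hypothesis as strong convexity
  have hsc' : ∀ᵐ d ∂P, StrongConvexOn Set.univ μ (fun θ => ℓ θ d) :=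
    hsc.mono fun d hd => strongConvexOn_iff_convex.mpr hd
  -- the CVaR is strongly convex
  have hmain : StrongConvexOn Set.univ μ (fun θ => ⨅ t : ℝ, g θ t) := by
    refine ⟨convex_univ, fun θ₀ _ θ₁ _ a b ha hb hab => ?_⟩
    rcases eq_or_lt_of_le ha with h0 | ha'
    · obtain rfl : b = 1 := by linarith
      simp [← h0]
    rcases eq_or_lt_of_le hb with h0 | hb'
    · obtain rfl : a = 1 := by linarith
      simp [← h0]
    set θc := a • θ₀ + b • θ₁ with hθc
    set Δ : ℝ := a * b * (μ / 2 * ‖θ₀ - θ₁‖ ^ 2) with hΔ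
    have claim : ∀ t₀ t₁ : ℝ, (⨅ t : ℝ, g θc t) + Δ ≤ a * g θ₀ t₀ + b * g θ₁ t₁ := by
      intro t₀ t₁
      set t' : ℝ := a * t₀ + b * t₁ - Δ with ht'
      have hFle : (⨅ t : ℝ, g θc t) ≤ g θc t' := ciInf_le (hbdd θc) t'
      -- pointwise inequality
      have hptw : ∀ᵐ d ∂P, max (ℓ θc d - t') 0 ≤
          a * max (ℓ θ₀ d - t₀) 0 + b * max (ℓ θ₁ d - t₁) 0 := by
        refine hsc'.mono fun d hd => ?_
        have hst : ℓ θc d ≤ a * ℓ θ₀ d + b * ℓ θ₁ d - Δ :=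
          hd.2 (Set.mem_univ θ₀) (Set.mem_univ θ₁) ha hb hab
        have hr0 : (0 : ℝ) ≤ a * max (ℓ θ₀ d - t₀) 0 + b * max (ℓ θ₁ d - t₁) 0 :=
          add_nonneg (mul_nonneg ha (le_max_right _ _)) (mul_nonneg hb (le_max_right _ _))
        refine max_le ?_ hr0
        have h0 : a * (ℓ θ₀ d - t₀) ≤ a * max (ℓ θ₀ d - t₀) 0 :=
          mul_le_mul_of_nonneg_left (le_max_left _ _) ha
        have h1 : b * (ℓ θ₁ d - t₁) ≤ b * max (ℓ θ₁ d - t₁) 0 :=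
          mul_le_mul_of_nonneg_left (le_max_left _ _) hb
        simp only [ht']
        nlinarith
      have hIle : (∫ d, max (ℓ θc d - t') 0 ∂P) ≤
          a * (∫ d, max (ℓ θ₀ d - t₀) 0 ∂P) + b * (∫ d, max (ℓ θ₁ d - t₁) 0 ∂P) := by
        have := integral_mono_ae (hI θc t')
          (((hI θ₀ t₀).const_mul a).add ((hI θ₁ t₁).const_mul b)) hptw
        simp only [Pi.add_apply] at this
        rwa [integral_add ((hI θ₀ t₀).const_mul a) ((hI θ₁ t₁).const_mul b),
          integral_const_mul, integral_const_mul] at this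
      have hgle : g θc t' ≤ a * g θ₀ t₀ + b * g θ₁ t₁ - Δ := by
        have h4 : α⁻¹ * (∫ d, max (ℓ θc d - t') 0 ∂P) ≤
            α⁻¹ * (a * (∫ d, max (ℓ θ₀ d - t₀) 0 ∂P) + b * (∫ d, max (ℓ θ₁ d - t₁) 0 ∂P)) :=
          mul_le_mul_of_nonneg_left hIle hαinv0
        have : t' + α⁻¹ * (a * (∫ d, max (ℓ θ₀ d - t₀) 0 ∂P)
            + b * (∫ d, max (ℓ θ₁ d - t₁) 0 ∂P))
            = a * g θ₀ t₀ + b * g θ₁ t₁ - Δ := by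
          simp only [hg, ht']; ring
        simp only [hg] at h4 ⊢
        linarith [h4, this.le, this.ge]
      linarith
    have hfinal : (⨅ t : ℝ, g θc t) + Δ ≤ a * (⨅ t : ℝ, g θ₀ t) + b * (⨅ t : ℝ, g θ₁ t) := by
      have h5 : (⨅ t : ℝ, g θc t) + Δ - b * (⨅ t : ℝ, g θ₁ t) ≤ a * (⨅ t : ℝ, g θ₀ t) := by
        rw [Real.mul_iInf_of_nonneg ha]
        refine le_ciInf fun t₀ => ?_
        have h6 : (⨅ t : ℝ, g θc t) + Δ - a * g θ₀ t₀ ≤ b * (⨅ t : ℝ, g θ₁ t) := by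
          rw [Real.mul_iInf_of_nonneg hb]
          refine le_ciInf fun t₁ => ?_
          linarith [claim t₀ t₁]
        linarith
      linarith
    simp only [smul_eq_mul] at hfinal ⊢
    linarith
  have := strongConvexOn_iff_convex.mp hmain
  simpa only [hg] using this
end
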